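/- Let d be a positive integer that is not a perfect square, and let (x₁, y₁) be the fundamental (least positive) solution of x² - d·y² = 1. Then all positive integer solutions of x² - d·y² = 1 are given by x = V_n(2x₁, -1)/2 and y = y₁·U_n(2x₁, -1) for n ≥ 1, where U and V are the Lucas sequences of the first and second kind with parameters (2x₁, -1). -/
import Mathlib


/-- Lucas sequence of the first kind with parameters `(P, -1)`. -/
def lucasU (P : ℤ) : ℕ → ℤ
  | 0 => 0
  | 1 => 1
  | n + 2 => P * lucasU P (n + 1) - lucasU P n

/-- Lucas sequence of the second kind with parameters `(P, -1)`. -/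
def lucasV (P : ℤ) : ℕ → ℤ
  | 0 => 2
  | 1 => P
  | n + 2 => P * lucasV P (n + 1) - lucasV P n

open Pell Pell.Solution₁ in
theorem stmt_15 (d : ℤ) (hd : 0 < d) (hns : ¬ IsSquare d) (x₁ y₁ : ℤ)
    (hx₁ : 0 < x₁) (hy₁ : 0 < y₁) (hfund : x₁ ^ 2 - d * y₁ ^ 2 = 1)
    (hmin : ∀ x y : ℤ, 0 < x → 0 < y → x ^ 2 - d * y ^ 2 = 1 → x₁ ≤ x)
    (x y : ℤ) (hx : 0 < x) (hy : 0 < y) :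
    x ^ 2 - d * y ^ 2 = 1 ↔
      ∃ n : ℕ, 1 ≤ n ∧ 2 * x = lucasV (2 * x₁) n ∧ y = y₁ * lucasU (2 * x₁) n := by
  set a₁ : Solution₁ d := Solution₁.mk x₁ y₁ hfund with ha₁
  have hax : a₁.x = x₁ := rfl
  have hay : a₁.y = y₁ := rfl
  have hx₁1 : 1 < x₁ := by nlinarith
  have hfun : IsFundamental a₁ := by
    refine ⟨by rwa [hax], by rwa [hay], fun {b} hb => ?_⟩
    have hby : b.y ≠ 0 := y_ne_zero_of_one_lt_x hb
    have : b.x ^ 2 - d * |b.y| ^ 2 = 1 := by rw [sq_abs]; exact b.prop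
    rw [hax]
    exact hmin b.x |b.y| (zero_lt_one.trans hb) (abs_pos.mpr hby) this
  -- key: components of a₁ ^ n
  have key : ∀ n : ℕ, 2 * (a₁ ^ n).x = lucasV (2 * x₁) n ∧
      (a₁ ^ n).y = y₁ * lucasU (2 * x₁) n := by
    have stepx : ∀ n : ℕ, (a₁ ^ (n + 1)).x = (a₁ ^ n).x * x₁ + d * ((a₁ ^ n).y * y₁) := by
      intro n; rw [pow_succ, x_mul, hax, hay]
    have stepy : ∀ n : ℕ, (a₁ ^ (n + 1)).y = (a₁ ^ n).x * y₁ + (a₁ ^ n).y * x₁ := by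
      intro n; rw [pow_succ, y_mul, hax, hay]
    intro n
    induction n using Nat.twoStepInduction with
    | zero => simp [lucasU, lucasV]
    | one =>
      constructor
      · rw [pow_one, hax]; show 2 * x₁ = 2 * x₁; ring
      · rw [pow_one, hay]; show y₁ = y₁ * 1; ring
    | more n ih ih1 =>
      obtain ⟨ihV, ihU⟩ := ih
      obtain ⟨ihV1, ihU1⟩ := ih1
      have eU : lucasU (2 * x₁) (n + 2) = 2 * x₁ * lucasU (2 * x₁) (n + 1) - lucasU (2 * x₁) n :=
        rfl
      have eV : lucasV (2 * x₁) (n + 2) = 2 * x₁ * lucasV (2 * x₁) (n + 1) - lucasV (2 * x₁) n :=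
        rfl
      have hX2 := stepx (n + 1)
      have hY2 := stepy (n + 1)
      have hX1 := stepx n
      have hY1 := stepy n
      rw [show n + 1 + 1 = n + 2 from rfl] at hX2 hY2
      have hrecX : (a₁ ^ (n + 2)).x = 2 * x₁ * (a₁ ^ (n + 1)).x - (a₁ ^ n).x := by
        linear_combination hX2 + d * y₁ * hY1 - x₁ * hX1 - (a₁ ^ n).x * hfund
      have hrecY : (a₁ ^ (n + 2)).y = 2 * x₁ * (a₁ ^ (n + 1)).y - (a₁ ^ n).y := by
        linear_combination hY2 + y₁ * hX1 - x₁ * hY1 - (a₁ ^ n).y * hfund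
      constructor
      · rw [eV]; linear_combination 2 * hrecX + 2 * x₁ * ihV1 - ihV
      · rw [eU]; linear_combination hrecY + 2 * x₁ * ihU1 - ihU
  constructor
  · intro hsol
    set a : Solution₁ d := Solution₁.mk x y hsol with ha
    obtain ⟨n, hn⟩ := hfun.eq_pow_of_nonneg (a := a) hx hy.le
    refine ⟨n, ?_, ?_, ?_⟩
    · rcases Nat.eq_zero_or_pos n with rfl | h
      · exfalso
        have : a.y = 0 := by rw [hn]; simp
        rw [show a.y = y from rfl] at this
        omega
      · exact h
    · have := (key n).1
      rw [← hn] at this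
      rw [← this]; rfl
    · have := (key n).2
      rw [← hn] at this
      rw [← this]; rfl
  · rintro ⟨n, hn, h2x, hy'⟩
    obtain ⟨kV, kU⟩ := key n
    have hxx : x = (a₁ ^ n).x := by omega
    have hyy : y = (a₁ ^ n).y := by rw [hy', kU]
    rw [hxx, hyy]
    exact (a₁ ^ n).prop
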